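/- Let σ(t) = 1/(1 + exp(−t)), let N > 0, γ > 0, δ > 0, T > 0, and let x : [0,T] → ℝ be differentiable with x(0) = 0 and x′(t) = exp(−Nδt/T)·(σ(γNt/T) − x(t)) for all t ∈ [0,T]. Define β(s) = (−1/(Nδ))·log(exp(−Nδ) − (Nδ/T)·log s) for s ∈ (0,1] and τ₀ = exp(−(T/(Nδ))·(1 − exp(−Nδ))). Then the total variational distance decomposes as σ(Nγ) − x(T) = σ(Nγ)·τ₀ + ∫_{τ₀}^{1} (σ(Nγ) − σ(Nγ·β(τ))) dτ. -/

import Mathlib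

/-- The logistic sigmoid function σ(t) = 1/(1 + exp(−t)). -/
noncomputable def logistic (t : ℝ) : ℝ := 1 / (1 + Real.exp (-t))

lemma logistic_continuous : Continuous logistic := by
  unfold logistic
  apply Continuous.div continuous_const (by continuity)
  intro t
  positivity

set_option maxHeartbeats 1000000 in
/-- for the annealed dynamics x′(t) = exp(−Nδt/T)·(σ(γNt/T) − x(t))
with x(0) = 0, the total variational distance decomposes as
σ(Nγ) − x(T) = σ(Nγ)·τ₀ + ∫_{τ₀}^{1} (σ(Nγ) − σ(Nγ·β(τ))) dτ. -/
theorem stmt_9 (N γ δ T : ℝ) (hN : 0 < N) (hγ : 0 < γ) (hδ : 0 < δ) (hT : 0 < T)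
    (x : ℝ → ℝ)
    (hx0 : x 0 = 0)
    (hode : ∀ t ∈ Set.Icc (0:ℝ) T, HasDerivAt x
      (Real.exp (-(N * δ * t / T)) * (logistic (γ * N * t / T) - x t)) t)
    (β : ℝ → ℝ)
    (hβ : ∀ s ∈ Set.Ioc (0:ℝ) 1, β s =
      (-1 / (N * δ)) * Real.log (Real.exp (-(N * δ)) - (N * δ / T) * Real.log s))
    (τ₀ : ℝ)
    (hτ₀ : τ₀ = Real.exp (-(T / (N * δ)) * (1 - Real.exp (-(N * δ))))) :
    logistic (N * γ) - x T =
      logistic (N * γ) * τ₀ +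
        ∫ τ in τ₀..1, (logistic (N * γ) - logistic (N * γ * β τ)) := by
  have ha : 0 < N * δ := mul_pos hN hδ
  have haT : 0 < N * δ / T := div_pos ha hT
  have hTne : T ≠ 0 := ne_of_gt hT
  have hane : N * δ ≠ 0 := ne_of_gt ha
  -- auxiliary functions
  set A : ℝ → ℝ := fun t => (T / (N * δ)) * (1 - Real.exp (-(N * δ * t / T))) with hA
  set φ : ℝ → ℝ := fun t => Real.exp (A t - A T) with hφ
  set ψ : ℝ → ℝ := fun t => Real.exp (A t - A T) * Real.exp (-(N * δ * t / T)) with hψ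
  set g : ℝ → ℝ := fun τ => logistic (N * γ *
      ((-1 / (N * δ)) * Real.log (Real.exp (-(N * δ)) - (N * δ / T) * Real.log τ))) with hg
  have hAT : A T = (T / (N * δ)) * (1 - Real.exp (-(N * δ))) := by
    simp only [hA]
    rw [show N * δ * T / T = N * δ by field_simp]
  -- derivative of A
  have hAderiv : ∀ t : ℝ, HasDerivAt A (Real.exp (-(N * δ * t / T))) t := by
    intro t
    have h1 : HasDerivAt (fun t : ℝ => -(N * δ * t / T)) (-(N * δ / T)) t := by
      have := (((hasDerivAt_id t).const_mul (N * δ)).div_const T).neg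
      simp only [id] at this
      refine this.congr_deriv ?_
      ring
    have h2 := h1.exp
    have h3 := (h2.const_sub 1).const_mul (T / (N * δ))
    refine h3.congr_deriv ?_
    field_simp
  have hφderiv : ∀ t : ℝ, HasDerivAt φ (ψ t) t := by
    intro t
    have := ((hAderiv t).sub_const (A T)).exp
    simpa [hφ, hψ] using this
  have hAcont : Continuous A := by
    simp only [hA]
    apply continuous_const.mul
    apply continuous_const.sub
    exact Real.continuous_exp.comp (((continuous_const.mul continuous_id).div_const T).neg)
  have hlin : Continuous (fun t : ℝ => Real.exp (-(N * δ * t / T))) := by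
    apply Real.continuous_exp.comp
    exact ((continuous_const.mul continuous_id).div_const T).neg
  have hψcont : Continuous ψ := by
    simp only [hψ]
    exact (Real.continuous_exp.comp (hAcont.sub continuous_const)).mul hlin
  -- Step A : x T = ∫ t in 0..T, ψ t * logistic (γ N t / T)
  set f : ℝ → ℝ := fun t => ψ t * logistic (γ * N * t / T) with hf
  have hfcont : Continuous f := by
    simp only [hf]
    exact hψcont.mul (logistic_continuous.comp (by continuity))
  set I : ℝ → ℝ := fun t => ∫ s in (0:ℝ)..t, f s with hI
  have hIderiv : ∀ t : ℝ, HasDerivAt I (f t) t := fun t =>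
    (hfcont.integral_hasStrictDerivAt 0 t).hasDerivAt
  set H : ℝ → ℝ := fun t => φ t * x t - I t with hH
  have hHderiv : ∀ t ∈ Set.uIcc (0:ℝ) T, HasDerivAt H 0 t := by
    intro t ht
    rw [Set.uIcc_of_le hT.le] at ht
    have hx := hode t ht
    have := ((hφderiv t).mul hx).sub (hIderiv t)
    refine this.congr_deriv ?_
    simp only [hψ, hφ, hf]
    ring
  have hHineg : IntervalIntegrable (fun _ : ℝ => (0:ℝ)) MeasureTheory.volume 0 T :=
    intervalIntegrable_const
  have hHTH0 : H T = H 0 := by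
    have := intervalIntegral.integral_eq_sub_of_hasDerivAt hHderiv hHineg
    simp at this
    linarith
  have hφT : φ T = 1 := by simp [hφ]
  have hA0 : A 0 = 0 := by simp [hA]
  have hφ0 : φ 0 = τ₀ := by
    simp only [hφ, hτ₀, hAT, hA0]
    congr 1
    ring
  have hxT : x T = I T := by
    have h0 : H 0 = 0 := by
      simp only [hH, hI, hx0, intervalIntegral.integral_same]
      ring
    have hTT : H T = x T - I T := by
      simp only [hH, hφT]; ring
    rw [hTT, h0] at hHTH0
    linarith
  -- basic facts about τ₀
  have hτ0pos : 0 < τ₀ := hτ₀ ▸ Real.exp_pos _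
  have hτ0lt1 : τ₀ < 1 := by
    rw [hτ₀]
    apply Real.exp_lt_one_iff.mpr
    have h1 : Real.exp (-(N * δ)) < 1 := Real.exp_lt_one_iff.mpr (by linarith)
    have h2 : 0 < T / (N * δ) := div_pos hT ha
    nlinarith
  -- image of φ on [0,T] lies in [τ₀, 1]
  have himg : ∀ t ∈ Set.uIcc (0:ℝ) T, φ t ∈ Set.Icc τ₀ 1 := by
    intro t ht
    rw [Set.uIcc_of_le hT.le] at ht
    have hAt0 : 0 ≤ A t := by
      simp only [hA]
      have : Real.exp (-(N * δ * t / T)) ≤ 1 := by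
        apply Real.exp_le_one_iff.mpr
        have : 0 ≤ N * δ * t / T := div_nonneg (mul_nonneg ha.le ht.1) hT.le
        linarith
      have h2 : 0 ≤ T / (N * δ) := (div_pos hT ha).le
      nlinarith
    have hAtT : A t ≤ A T := by
      simp only [hA]
      have h1 : Real.exp (-(N * δ * T / T)) ≤ Real.exp (-(N * δ * t / T)) := by
        apply Real.exp_le_exp.mpr
        have : N * δ * t / T ≤ N * δ * T / T := by
          apply (div_le_div_iff_of_pos_right hT).mpr
          nlinarith [ht.2]
        linarith
      have h2 : 0 ≤ T / (N * δ) := (div_pos hT ha).le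
      nlinarith
    constructor
    · rw [← hφ0]
      simp only [hφ]
      apply Real.exp_le_exp.mpr
      rw [hA0]
      linarith
    · simp only [hφ]
      apply Real.exp_le_one_iff.mpr
      linarith
  -- continuity of g on [τ₀, 1]
  have hargpos : ∀ τ ∈ Set.Icc τ₀ (1:ℝ),
      0 < Real.exp (-(N * δ)) - N * δ / T * Real.log τ := by
    intro τ hτ
    have hlog : Real.log τ ≤ 0 := Real.log_nonpos (lt_of_lt_of_le hτ0pos hτ.1).le hτ.2
    have := Real.exp_pos (-(N * δ))
    nlinarith
  have hgcont : ContinuousOn g (Set.Icc τ₀ 1) := by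
    simp only [hg]
    apply logistic_continuous.comp_continuousOn
    apply ContinuousOn.mul continuousOn_const
    apply ContinuousOn.mul continuousOn_const
    apply ContinuousOn.log
    · apply ContinuousOn.sub continuousOn_const
      apply ContinuousOn.mul continuousOn_const
      apply Real.continuousOn_log.mono
      intro τ hτ
      exact ne_of_gt (lt_of_lt_of_le hτ0pos hτ.1)
    · intro τ hτ
      exact ne_of_gt (hargpos τ hτ)
  -- g ∘ φ = logistic (γ N t / T)
  have hgφ : ∀ t : ℝ, g (φ t) = logistic (γ * N * t / T) := by
    intro t
    simp only [hg, hφ]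
    rw [Real.log_exp]
    have hcancel : N * δ / T * (T / (N * δ)) = 1 := by
      rw [div_mul_div_comm, mul_comm]
      exact div_self (by positivity)
    have key : ∀ e1 e2 : ℝ,
        e1 - N * δ / T * (T / (N * δ) * (1 - e2) - T / (N * δ) * (1 - e1)) = e2 := by
      intro e1 e2
      linear_combination (e2 - e1) * hcancel
    have h1 : Real.exp (-(N * δ)) - N * δ / T * (A t - A T) = Real.exp (-(N * δ * t / T)) := by
      rw [hAT]
      simp only [hA]
      exact key _ _
    rw [h1, Real.log_exp]
    congr 1
    rw [show N * γ * (-1 / (N * δ) * -(N * δ * t / T)) = (N * δ) / (N * δ) * (γ * N * t / T) by ring]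
    rw [div_self hane, one_mul]
  -- substitution
  have hsub : (∫ t in (0:ℝ)..T, ψ t • (g ∘ φ) t) = ∫ τ in (φ 0)..(φ T), g τ := by
    apply intervalIntegral.integral_comp_smul_deriv' (fun t _ => hφderiv t)
      hψcont.continuousOn
    apply hgcont.mono
    intro τ hτ
    obtain ⟨t, ht, rfl⟩ := hτ
    exact himg t ht
  have hIT : I T = ∫ τ in τ₀..1, g τ := by
    rw [← hφ0, ← hφT, ← hsub]
    simp only [hI]
    apply intervalIntegral.integral_congr
    intro t _
    simp only [hf, Function.comp, smul_eq_mul, hgφ t]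
  -- final assembly
  have hint_g : IntervalIntegrable g MeasureTheory.volume τ₀ 1 := by
    apply ContinuousOn.intervalIntegrable
    rwa [Set.uIcc_of_le hτ0lt1.le]
  have hcongr : (∫ τ in τ₀..1, (logistic (N * γ) - logistic (N * γ * β τ)))
      = ∫ τ in τ₀..1, (logistic (N * γ) - g τ) := by
    apply intervalIntegral.integral_congr
    intro τ hτ
    rw [Set.uIcc_of_le hτ0lt1.le] at hτ
    have hτIoc : τ ∈ Set.Ioc (0:ℝ) 1 := ⟨lt_of_lt_of_le hτ0pos hτ.1, hτ.2⟩
    simp only [hg, hβ τ hτIoc]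
  have hsplit : (∫ τ in τ₀..1, (logistic (N * γ) - g τ))
      = (1 - τ₀) * logistic (N * γ) - ∫ τ in τ₀..1, g τ := by
    rw [intervalIntegral.integral_sub intervalIntegrable_const hint_g,
      intervalIntegral.integral_const]
    simp [smul_eq_mul]
  rw [hcongr, hsplit, ← hIT, ← hxT]
  ring
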